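/- Let d₀, d₁ : ℝ^m → [0,∞) be convex. For fixed θ ∈ ℝ^m, the function y ↦ Ψ(θ, y) := inf{(1−y)d₀(θ⁰) + y d₁(θ¹) : (1−y)θ⁰ + yθ¹ = θ} is convex on (0,1). -/

import Mathlib

open Set

/-- The weighted infimal convolution `Ψ(θ, y)`. -/
noncomputable def Psi {m : ℕ} (d₀ d₁ : EuclideanSpace ℝ (Fin m) → ℝ)
    (θ : EuclideanSpace ℝ (Fin m)) (y : ℝ) : ℝ :=
  sInf {v : ℝ | ∃ θ0 θ1 : EuclideanSpace ℝ (Fin m),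
    (1 - y) • θ0 + y • θ1 = θ ∧ v = (1 - y) * d₀ θ0 + y * d₁ θ1}

lemma Psi_set_nonempty {m : ℕ} (d₀ d₁ : EuclideanSpace ℝ (Fin m) → ℝ)
    (θ : EuclideanSpace ℝ (Fin m)) (y : ℝ) :
    {v : ℝ | ∃ θ0 θ1 : EuclideanSpace ℝ (Fin m),
      (1 - y) • θ0 + y • θ1 = θ ∧ v = (1 - y) * d₀ θ0 + y * d₁ θ1}.Nonempty :=
  ⟨_, θ, θ, by rw [← add_smul]; norm_num, rfl⟩

lemma Psi_set_bddBelow {m : ℕ} (d₀ d₁ : EuclideanSpace ℝ (Fin m) → ℝ)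
    (hd₀0 : ∀ θ, 0 ≤ d₀ θ) (hd₁0 : ∀ θ, 0 ≤ d₁ θ)
    (θ : EuclideanSpace ℝ (Fin m)) {y : ℝ} (hy0 : 0 ≤ y) (hy1 : y ≤ 1) :
    BddBelow {v : ℝ | ∃ θ0 θ1 : EuclideanSpace ℝ (Fin m),
      (1 - y) • θ0 + y • θ1 = θ ∧ v = (1 - y) * d₀ θ0 + y * d₁ θ1} := by
  refine ⟨0, ?_⟩
  rintro v ⟨θ0, θ1, -, rfl⟩
  have h0 := hd₀0 θ0
  have h1 := hd₁0 θ1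
  nlinarith

set_option maxHeartbeats 1000000 in
/-- for fixed `θ`, `y ↦ Ψ(θ, y)` is convex on `(0, 1)`. -/
theorem Psi_convex_in_y
    (m : ℕ) (d₀ d₁ : EuclideanSpace ℝ (Fin m) → ℝ)
    (hd₀ : ConvexOn ℝ univ d₀) (hd₁ : ConvexOn ℝ univ d₁)
    (hd₀0 : ∀ θ, 0 ≤ d₀ θ) (hd₁0 : ∀ θ, 0 ≤ d₁ θ)
    (θ : EuclideanSpace ℝ (Fin m)) :
    ConvexOn ℝ (Ioo (0:ℝ) 1) (fun y => Psi d₀ d₁ θ y) := by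
  refine ⟨convex_Ioo 0 1, ?_⟩
  intro p hp q hq a b ha hb hab
  obtain ⟨hp0, hp1⟩ := hp
  obtain ⟨hq0, hq1⟩ := hq
  simp only [smul_eq_mul]
  set y : ℝ := a * p + b * q with hy
  have hy0 : 0 < y := by
    rcases lt_or_eq_of_le ha with h | h
    · nlinarith [mul_pos h hp0, mul_nonneg hb hq0.le]
    · have hb1 : b = 1 := by linarith
      rw [hy, ← h, hb1]; simpa using hq0
  have hy1 : y < 1 := by
    rcases lt_or_eq_of_le ha with h | h
    · nlinarith [mul_pos h (by linarith : (0:ℝ) < 1 - p),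
        mul_nonneg hb (by linarith : (0:ℝ) ≤ 1 - q)]
    · have hb1 : b = 1 := by linarith
      rw [hy, ← h, hb1]; simpa using hq1
  have h1y : (0:ℝ) < 1 - y := by linarith
  refine le_of_forall_pos_le_add ?_
  intro ε hε
  obtain ⟨u, ⟨θ0a, θ1a, hca, hva⟩, hua⟩ :=
    Real.lt_sInf_add_pos (Psi_set_nonempty d₀ d₁ θ p) hε
  obtain ⟨v, ⟨θ0b, θ1b, hcb, hvb⟩, hvb'⟩ :=
    Real.lt_sInf_add_pos (Psi_set_nonempty d₀ d₁ θ q) hε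
  -- the combined points
  set w0 : EuclideanSpace ℝ (Fin m) := (a * (1 - p)) • θ0a + (b * (1 - q)) • θ0b with hw0
  set w1 : EuclideanSpace ℝ (Fin m) := (a * p) • θ1a + (b * q) • θ1b with hw1
  set θ0 : EuclideanSpace ℝ (Fin m) := (1 - y)⁻¹ • w0 with hθ0
  set θ1 : EuclideanSpace ℝ (Fin m) := y⁻¹ • w1 with hθ1
  have hconstraint : (1 - y) • θ0 + y • θ1 = θ := by
    rw [hθ0, hθ1, smul_inv_smul₀ (ne_of_gt h1y), smul_inv_smul₀ (ne_of_gt hy0)]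
    have : w0 + w1 = a • ((1 - p) • θ0a + p • θ1a) + b • ((1 - q) • θ0b + q • θ1b) := by
      rw [hw0, hw1]; module
    rw [this, hca, hcb, ← add_smul, hab, one_smul]
  have hmem : ((1 - y) * d₀ θ0 + y * d₁ θ1) ∈
      {v : ℝ | ∃ θ0' θ1' : EuclideanSpace ℝ (Fin m),
        (1 - y) • θ0' + y • θ1' = θ ∧ v = (1 - y) * d₀ θ0' + y * d₁ θ1'} :=
    ⟨θ0, θ1, hconstraint, rfl⟩
  have hle : Psi d₀ d₁ θ y ≤ (1 - y) * d₀ θ0 + y * d₁ θ1 :=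
    csInf_le (Psi_set_bddBelow d₀ d₁ hd₀0 hd₁0 θ hy0.le hy1.le) hmem
  -- convexity bounds
  have hsum0 : a * (1 - p) + b * (1 - q) = 1 - y := by rw [hy]; nlinarith
  have hsum1 : a * p + b * q = y := rfl
  have hd0bound : d₀ θ0 ≤ ((a * (1 - p)) / (1 - y)) * d₀ θ0a
      + ((b * (1 - q)) / (1 - y)) * d₀ θ0b := by
    have hθ0' : θ0 = ((a * (1 - p)) / (1 - y)) • θ0a + ((b * (1 - q)) / (1 - y)) • θ0b := by
      rw [hθ0, hw0, smul_add, smul_smul, smul_smul]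
      rw [div_eq_inv_mul, div_eq_inv_mul]
    have hc0 : (0:ℝ) ≤ (a * (1 - p)) / (1 - y) :=
      div_nonneg (mul_nonneg ha (by linarith)) h1y.le
    have hc0' : (0:ℝ) ≤ (b * (1 - q)) / (1 - y) :=
      div_nonneg (mul_nonneg hb (by linarith)) h1y.le
    have hcs : (a * (1 - p)) / (1 - y) + (b * (1 - q)) / (1 - y) = 1 := by
      field_simp
      linarith [hsum0]
    have := hd₀.2 (mem_univ θ0a) (mem_univ θ0b) hc0 hc0' hcs
    rw [← hθ0'] at this
    simpa using this
  have hd1bound : d₁ θ1 ≤ ((a * p) / y) * d₁ θ1a + ((b * q) / y) * d₁ θ1b := by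
    have hθ1' : θ1 = ((a * p) / y) • θ1a + ((b * q) / y) • θ1b := by
      rw [hθ1, hw1, smul_add, smul_smul, smul_smul]
      rw [div_eq_inv_mul, div_eq_inv_mul]
    have hc1 : (0:ℝ) ≤ (a * p) / y := div_nonneg (mul_nonneg ha hp0.le) hy0.le
    have hc1' : (0:ℝ) ≤ (b * q) / y := div_nonneg (mul_nonneg hb hq0.le) hy0.le
    have hcs : (a * p) / y + (b * q) / y = 1 := by
      field_simp
      exact hsum1
    have := hd₁.2 (mem_univ θ1a) (mem_univ θ1b) hc1 hc1' hcs
    rw [← hθ1'] at this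
    simpa using this
  have key : (1 - y) * d₀ θ0 + y * d₁ θ1 ≤ a * u + b * v := by
    have h1 : (1 - y) * d₀ θ0 ≤ a * (1 - p) * d₀ θ0a + b * (1 - q) * d₀ θ0b := by
      have := mul_le_mul_of_nonneg_left hd0bound h1y.le
      calc (1 - y) * d₀ θ0 ≤ (1 - y) * (((a * (1 - p)) / (1 - y)) * d₀ θ0a
            + ((b * (1 - q)) / (1 - y)) * d₀ θ0b) := this
        _ = a * (1 - p) * d₀ θ0a + b * (1 - q) * d₀ θ0b := by
            field_simp; try ring
    have h2 : y * d₁ θ1 ≤ a * p * d₁ θ1a + b * q * d₁ θ1b := by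
      have := mul_le_mul_of_nonneg_left hd1bound hy0.le
      calc y * d₁ θ1 ≤ y * (((a * p) / y) * d₁ θ1a + ((b * q) / y) * d₁ θ1b) := this
        _ = a * p * d₁ θ1a + b * q * d₁ θ1b := by field_simp; try ring
    have : a * u + b * v = a * ((1 - p) * d₀ θ0a + p * d₁ θ1a)
        + b * ((1 - q) * d₀ θ0b + q * d₁ θ1b) := by rw [hva, hvb]
    rw [this]; nlinarith [h1, h2]
  have hfin : a * u + b * v ≤ a * Psi d₀ d₁ θ p + b * Psi d₀ d₁ θ q + ε := by
    have h1 : a * u ≤ a * (Psi d₀ d₁ θ p + ε) := mul_le_mul_of_nonneg_left hua.le ha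
    have h2 : b * v ≤ b * (Psi d₀ d₁ θ q + ε) := mul_le_mul_of_nonneg_left hvb'.le hb
    nlinarith [h1, h2]
  calc Psi d₀ d₁ θ y ≤ (1 - y) * d₀ θ0 + y * d₁ θ1 := hle
    _ ≤ a * u + b * v := key
    _ ≤ a * Psi d₀ d₁ θ p + b * Psi d₀ d₁ θ q + ε := hfin
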